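/- Let P : ℝ → ℝ be bounded, differentiable, and integrable with ‖P′‖_∞ < ∞, ‖P‖_∞ > 0, and let r > (8³/π) · ‖P′‖_∞ / ‖P‖_∞. Define f = P ⋆ h_r, i.e. f(x) = (1/√(2π)) ∫_ℝ P(x - t) h_r(t) dt, where h_r(t) = r·h(rt) and h is the Fejér kernel h(x) = (1/√(2π)) (sin(x/2)/(x/2))². Then |f(x) - P(x)| < ‖P‖_∞ / 4 for every real number x. -/

import Mathlib

open MeasureTheory Real Complex FourierTransform Set Function

/-- The Fejér kernel `h(x) = (1/√(2π)) (sin(x/2)/(x/2))²`. -/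
noncomputable def fejer (x : ℝ) : ℝ :=
  (1 / Real.sqrt (2 * Real.pi)) * (Real.sin (x / 2) / (x / 2)) ^ 2

/-- Supremum norm on ℝ. -/
noncomputable def supNorm (f : ℝ → ℝ) : ℝ := ⨆ x, |f x|



noncomputable def triangle : ℝ → ℂ := fun v => ((max (1 - |v|) 0 : ℝ) : ℂ)

lemma triangle_cont : Continuous triangle :=
  Complex.continuous_ofReal.comp ((continuous_const.sub _root_.continuous_abs).max continuous_const)

lemma triangle_eq_zero {v : ℝ} (hv : 1 ≤ |v|) : triangle v = 0 := by
  simp [triangle, max_eq_right (by linarith : 1 - |v| ≤ 0)]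

lemma triangle_integrable : Integrable triangle := by
  apply triangle_cont.integrable_of_hasCompactSupport
  apply HasCompactSupport.intro (isCompact_Icc (a := (-1:ℝ)) (b := 1))
  intro v hv
  simp only [Set.mem_Icc, not_and_or, not_le] at hv
  exact triangle_eq_zero (by rcases hv with h | h <;> [exact le_abs.2 (Or.inr (by linarith)); exact le_abs.2 (Or.inl h.le)])

lemma cos_part (a : ℝ) (ha : a ≠ 0) :
    ∫ v in (0:ℝ)..1, (1 - v) * Real.cos (a * v) = (1 - Real.cos a) / a ^ 2 := by
  have key : ∀ v ∈ Set.uIcc (0:ℝ) 1,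
      HasDerivAt (fun w => (1 - w) * Real.sin (a * w) / a - Real.cos (a * w) / a ^ 2)
        ((1 - v) * Real.cos (a * v)) v := by
    intro v _
    have hs : HasDerivAt (fun w : ℝ => Real.sin (a * w)) (a * Real.cos (a * v)) v := by
      simpa [mul_comm, Function.comp_def] using (Real.hasDerivAt_sin (a * v)).comp v ((hasDerivAt_id v).const_mul a)
    have hc : HasDerivAt (fun w : ℝ => Real.cos (a * w)) (-(a * Real.sin (a * v))) v := by
      simpa [mul_comm, Function.comp_def] using (Real.hasDerivAt_cos (a * v)).comp v ((hasDerivAt_id v).const_mul a)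
    have h1 : HasDerivAt (fun w : ℝ => 1 - w) (-1) v := (hasDerivAt_id v).const_sub 1
    have := (((h1.mul hs).div_const a).sub (hc.div_const (a ^ 2)))
    refine this.congr_deriv ?_
    rw [div_sub_div _ _ ha (pow_ne_zero 2 ha), div_eq_iff (mul_ne_zero ha (pow_ne_zero 2 ha))]
    ring
  rw [intervalIntegral.integral_eq_sub_of_hasDerivAt key
    (((continuous_const.sub continuous_id).mul
      (Real.continuous_cos.comp (continuous_const.mul continuous_id))).intervalIntegrable 0 1)]
  simp [Real.cos_zero, Real.sin_zero]
  field_simp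
  ring


lemma fourier_triangle (x : ℝ) (hx : x ≠ 0) :
    𝓕 triangle x = ((Real.sin (π * x) / (π * x)) ^ 2 : ℝ) := by
  have hpx : π * x ≠ 0 := mul_ne_zero Real.pi_ne_zero hx
  have ha : (2 * π * x) ≠ 0 := by
    rw [mul_assoc]; exact mul_ne_zero two_ne_zero hpx
  set c : ℝ → ℝ := fun v => max (1 - |v|) 0 with hc
  have hccont : Continuous c := (continuous_const.sub _root_.continuous_abs).max continuous_const
  set ψ : ℝ → ℝ := fun v => c v * Real.cos (2 * π * v * x) with hψ
  set φ : ℝ → ℝ := fun v => -(c v * Real.sin (2 * π * v * x)) with hφ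
  have hψcont : Continuous ψ :=
    hccont.mul (Real.continuous_cos.comp (by continuity))
  have hφcont : Continuous φ :=
    (hccont.mul (Real.continuous_sin.comp (by continuity))).neg
  have step1 : 𝓕 triangle x
      = ∫ v in (-1:ℝ)..1, Complex.exp (↑(-2 * π * v * x) * Complex.I) • triangle v := by
    rw [Real.fourier_real_eq_integral_exp_smul]
    rw [intervalIntegral.integral_eq_integral_of_support_subset]
    intro v hv
    simp only [mem_support] at hv
    by_contra hmem
    simp only [Set.mem_Ioc, not_and_or, not_lt, not_le] at hmem
    have : (1:ℝ) ≤ |v| := by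
      rcases hmem with h | h
      · exact le_abs.2 (Or.inr (by linarith))
      · exact le_abs.2 (Or.inl h.le)
    exact hv (by rw [triangle_eq_zero this, smul_zero])
  have key : ∀ θ b : ℝ, Complex.exp (↑(-θ) * Complex.I) • ((b : ℝ) : ℂ)
      = (↑(b * Real.cos θ) : ℂ) + (↑(-(b * Real.sin θ)) : ℂ) * Complex.I := by
    intro θ b
    rw [smul_eq_mul, Complex.exp_mul_I, ← Complex.ofReal_cos, ← Complex.ofReal_sin,
      Real.cos_neg, Real.sin_neg]
    push_cast
    ring
  have integrand_eq : ∀ v : ℝ, Complex.exp (↑(-2 * π * v * x) * Complex.I) • triangle v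
      = (↑(ψ v) : ℂ) + (↑(φ v) : ℂ) * Complex.I := by
    intro v
    have h1 : (-2 * π * v * x) = -(2 * π * v * x) := by ring
    rw [h1]
    exact key (2 * π * v * x) (c v)
  have step2 : 𝓕 triangle x = ↑(∫ v in (-1:ℝ)..1, ψ v) + ↑(∫ v in (-1:ℝ)..1, φ v) * Complex.I := by
    rw [step1]
    rw [intervalIntegral.integral_congr (g := fun v => (↑(ψ v) : ℂ) + (↑(φ v) : ℂ) * Complex.I)
      (fun v _ => integrand_eq v)]
    have hψI : IntervalIntegrable (fun v : ℝ => ((ψ v : ℝ) : ℂ)) volume (-1) 1 :=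
      (Complex.continuous_ofReal.comp hψcont).intervalIntegrable _ _
    have hφI : IntervalIntegrable (fun v : ℝ => ((φ v : ℝ) : ℂ) * Complex.I) volume (-1) 1 :=
      ((Complex.continuous_ofReal.comp hφcont).mul continuous_const).intervalIntegrable _ _
    rw [intervalIntegral.integral_add hψI hφI]
    rw [intervalIntegral.integral_mul_const, intervalIntegral.integral_ofReal,
      intervalIntegral.integral_ofReal]
  have hφzero : (∫ v in (-1:ℝ)..1, φ v) = 0 := by
    have h1 : (∫ v in (-1:ℝ)..1, φ (-v)) = ∫ v in (-1:ℝ)..1, φ v := by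
      rw [intervalIntegral.integral_comp_neg]; norm_num
    have h2 : ∀ v, φ (-v) = -φ v := by
      intro v
      simp only [hφ, hc, abs_neg, neg_neg]
      rw [show 2 * π * -v * x = -(2 * π * v * x) by ring, Real.sin_neg]
      ring
    simp_rw [h2] at h1
    rw [intervalIntegral.integral_neg] at h1
    linarith
  have hψval : (∫ v in (-1:ℝ)..1, ψ v) = 2 * ((1 - Real.cos (2 * π * x)) / (2 * π * x) ^ 2) := by
    have hsplit : (∫ v in (-1:ℝ)..1, ψ v)
        = (∫ v in (-1:ℝ)..0, ψ v) + ∫ v in (0:ℝ)..1, ψ v :=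
      (intervalIntegral.integral_add_adjacent_intervals
        (hψcont.intervalIntegrable _ _) (hψcont.intervalIntegrable _ _)).symm
    have heven : (∫ v in (-1:ℝ)..0, ψ v) = ∫ v in (0:ℝ)..1, ψ v := by
      have h1 : (∫ v in (0:ℝ)..1, ψ (-v)) = ∫ v in (-1:ℝ)..0, ψ v := by
        rw [intervalIntegral.integral_comp_neg]; norm_num
      have h2 : ∀ v, ψ (-v) = ψ v := by
        intro v
        simp only [hψ, hc, abs_neg]
        rw [show 2 * π * -v * x = -(2 * π * v * x) by ring, Real.cos_neg]
      simp_rw [h2] at h1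
      exact h1.symm
    have hval : (∫ v in (0:ℝ)..1, ψ v) = (1 - Real.cos (2 * π * x)) / (2 * π * x) ^ 2 := by
      have hcongr : Set.EqOn ψ (fun v => (1 - v) * Real.cos ((2 * π * x) * v)) (Set.uIcc 0 1) := by
        intro v hv
        rw [Set.uIcc_of_le (by norm_num : (0:ℝ) ≤ 1)] at hv
        simp only [hψ, hc]
        rw [_root_.abs_of_nonneg hv.1, max_eq_left (by linarith [hv.2] : (0:ℝ) ≤ 1 - v),
          show 2 * π * v * x = 2 * π * x * v by ring]
      rw [intervalIntegral.integral_congr hcongr, cos_part _ ha]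
    rw [hsplit, heven, hval]; ring
  have hid : Real.cos (2 * π * x) = 1 - 2 * Real.sin (π * x) ^ 2 := by
    rw [show 2 * π * x = 2 * (π * x) by ring, Real.cos_two_mul', Real.cos_sq']
    ring
  rw [step2, hφzero, hψval, Complex.ofReal_zero, zero_mul, add_zero, Complex.ofReal_inj]
  rw [hid, div_pow]
  field_simp
  ring


lemma sincsq_le (u : ℝ) : (Real.sin (u / 2) / (u / 2)) ^ 2 ≤ 2 * (1 + (u / 2) ^ 2)⁻¹ := by
  rcases eq_or_ne u 0 with h | h
  · simp [h]
  · have hv : u / 2 ≠ 0 := by simpa using h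
    rw [div_pow, show 2 * (1 + (u / 2) ^ 2)⁻¹ = 2 / (1 + (u / 2) ^ 2) by ring,
      div_le_div_iff₀ (by positivity) (by positivity)]
    nlinarith [Real.sin_sq_le_sq (x := u / 2), Real.sin_sq_le_one (u / 2), sq_nonneg (u / 2),
      Real.sin_sq_le_sq (x := u / 2)]

lemma sincsq_meas : Measurable fun u : ℝ => (Real.sin (u / 2) / (u / 2)) ^ 2 :=
  ((Real.measurable_sin.comp (measurable_id.div_const 2)).div
    (measurable_id.div_const 2)).pow_const 2

lemma integrable_sincsq : Integrable fun u : ℝ => (Real.sin (u / 2) / (u / 2)) ^ 2 := by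
  have base : Integrable (fun v : ℝ => (1 + v ^ 2)⁻¹) := integrable_inv_one_add_sq
  have h2 : Integrable (fun u : ℝ => (1 + (u / 2) ^ 2)⁻¹) := base.comp_div two_ne_zero
  refine (h2.const_mul 2).mono' sincsq_meas.aestronglyMeasurable (ae_of_all _ fun u => ?_)
  rw [Real.norm_eq_abs, _root_.abs_of_nonneg (by positivity)]
  exact sincsq_le u

lemma fourier_triangle_ae :
    𝓕 triangle =ᵐ[volume] fun x : ℝ => (((Real.sin (π * x) / (π * x)) ^ 2 : ℝ) : ℂ) := by
  have h0 : ∀ᵐ x : ℝ ∂volume, x ≠ 0 := by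
    filter_upwards [compl_mem_ae_iff.2 (measure_singleton (0:ℝ))] with x hx
    simpa using hx
  filter_upwards [h0] with x hx
  exact fourier_triangle x hx

lemma integrable_fourier_triangle : Integrable (𝓕 triangle) := by
  have h3 : Integrable fun x : ℝ => (Real.sin (π * x) / (π * x)) ^ 2 := by
    have h4 := integrable_sincsq.comp_mul_left' (R := 2 * π)
      (by positivity : (2 * π : ℝ) ≠ 0)
    refine h4.congr (ae_of_all _ fun x => ?_)
    show (Real.sin (2 * π * x / 2) / (2 * π * x / 2)) ^ 2 = (Real.sin (π * x) / (π * x)) ^ 2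
    rw [show 2 * π * x / 2 = π * x by ring]
  exact h3.ofReal.congr fourier_triangle_ae.symm

lemma key_integral : ∫ x : ℝ, (Real.sin (π * x) / (π * x)) ^ 2 = 1 := by
  have inv := triangle_cont.fourierInv_fourier_eq triangle_integrable integrable_fourier_triangle
  have h0 : 𝓕⁻ (𝓕 triangle) 0 = ∫ w : ℝ, 𝓕 triangle w := by
    rw [Real.fourierInv_eq']
    simp
  have h1 : 𝓕⁻ (𝓕 triangle) 0 = 1 := by
    rw [inv]; simp [triangle]
  have h2 : (∫ w : ℝ, 𝓕 triangle w)
      = ((∫ x : ℝ, (Real.sin (π * x) / (π * x)) ^ 2 : ℝ) : ℂ) := by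
    rw [integral_congr_ae fourier_triangle_ae]
    exact _root_.integral_ofReal (𝕜 := ℂ)
  have := h0.symm.trans h1
  rw [h2] at this
  exact_mod_cast this

lemma integral_sincsq : ∫ u : ℝ, (Real.sin (u / 2) / (u / 2)) ^ 2 = 2 * π := by
  have h := MeasureTheory.Measure.integral_comp_mul_left
    (fun u : ℝ => (Real.sin (u / 2) / (u / 2)) ^ 2) (2 * π)
  simp only [smul_eq_mul] at h
  have hL : (∫ x : ℝ, (Real.sin (2 * π * x / 2) / (2 * π * x / 2)) ^ 2) = 1 := by
    simp_rw [show ∀ x : ℝ, 2 * π * x / 2 = π * x from fun x => by ring]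
    exact key_integral
  rw [hL] at h
  rw [abs_of_pos (by positivity : (0:ℝ) < (2 * π)⁻¹)] at h
  have hstep : (∫ u : ℝ, (Real.sin (u / 2) / (u / 2)) ^ 2)
      = (2 * π) * ((2 * π)⁻¹ * ∫ u : ℝ, (Real.sin (u / 2) / (u / 2)) ^ 2) := by
    field_simp
  rw [hstep, ← h, mul_one]

lemma integral_fejer : ∫ u : ℝ, fejer u = Real.sqrt (2 * π) := by
  have hS : Real.sqrt (2 * π) > 0 := Real.sqrt_pos.2 (by positivity)
  have hS2 : Real.sqrt (2 * π) * Real.sqrt (2 * π) = 2 * π :=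
    Real.mul_self_sqrt (by positivity)
  simp only [fejer]
  rw [MeasureTheory.integral_const_mul, integral_sincsq, div_mul_eq_mul_div, one_mul,
    div_eq_iff hS.ne']
  linarith [hS2]


lemma tail_integrableOn {δ : ℝ} (hδ : 0 < δ) :
    IntegrableOn (fun t : ℝ => t⁻¹ ^ 2) (Ioi δ) := by
  refine (integrableOn_Ioi_rpow_of_lt (by norm_num : (-2:ℝ) < -1) hδ).congr_fun
    (fun t ht => ?_) measurableSet_Ioi
  have ht0 : (0:ℝ) < t := hδ.trans ht
  beta_reduce
  rw [show (-2:ℝ) = -((2:ℕ):ℝ) by norm_num, Real.rpow_neg ht0.le, Real.rpow_natCast, inv_pow]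

lemma tail_integral {δ : ℝ} (hδ : 0 < δ) :
    ∫ t in Ioi δ, t⁻¹ ^ 2 = δ⁻¹ := by
  have heq : ∀ t ∈ Ioi δ, t⁻¹ ^ 2 = t ^ (-2:ℝ) := by
    intro t ht
    have ht0 : (0:ℝ) < t := hδ.trans ht
    rw [show (-2:ℝ) = -((2:ℕ):ℝ) by norm_num, Real.rpow_neg ht0.le, Real.rpow_natCast, inv_pow]
  rw [setIntegral_congr_fun measurableSet_Ioi heq, integral_Ioi_rpow_of_lt (by norm_num) hδ]
  norm_num
  rw [Real.rpow_neg_one]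

lemma tail_integrableOn' {δ : ℝ} (hδ : 0 < δ) :
    IntegrableOn (fun t : ℝ => t⁻¹ ^ 2) (Iio (-δ)) := by
  rw [← (Measure.measurePreserving_neg (volume : Measure ℝ)).integrableOn_comp_preimage
      (Homeomorph.neg ℝ).measurableEmbedding]
  simp only [Function.comp_def, neg_preimage, neg_Iio, neg_neg, inv_neg, neg_sq]
  exact tail_integrableOn hδ

lemma tail_integral' {δ : ℝ} (hδ : 0 < δ) :
    ∫ t in Iio (-δ), t⁻¹ ^ 2 = δ⁻¹ := by
  have h := integral_comp_neg_Ioi δ (fun t : ℝ => t⁻¹ ^ 2)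
  simp only [inv_neg, neg_sq] at h
  rw [setIntegral_congr_set Iio_ae_eq_Iic, ← h, tail_integral hδ]

lemma conv_est (Q k : ℝ → ℝ) (x Mp Md δ S C : ℝ)
    (hMp : 0 < Mp) (hMd : 0 < Md) (hδdef : δ = Mp / (8 * Md)) (hS : 0 < S)
    (hQc : Continuous Q) (hQle : ∀ y, |Q y| ≤ Mp)
    (hQlip : ∀ y z, |Q y - Q z| ≤ Md * |y - z|)
    (hk0 : ∀ t, 0 ≤ k t) (hki : Integrable k) (hktot : ∫ t, k t = S)
    (htail : ∀ t, t ≠ 0 → k t ≤ C * t⁻¹ ^ 2) (hC : 0 ≤ C)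
    (hfinal : Mp / 8 + (1 / S) * (2 * Mp * (C * δ⁻¹ + C * δ⁻¹)) < Mp / 4) :
    |1 / S * (∫ t, Q (x - t) * k t) - Q x| < Mp / 4 := by
  have hδ : 0 < δ := by rw [hδdef]; positivity
  -- basic bounds on e t := Q (x - t) - Q x
  have he1 : ∀ t : ℝ, |Q (x - t) - Q x| ≤ Md * |t| := by
    intro t
    have := hQlip (x - t) x
    simpa [sub_sub_cancel_left, abs_neg] using this
  have he2 : ∀ t : ℝ, |Q (x - t) - Q x| ≤ 2 * Mp := by
    intro t
    obtain ⟨l1, r1⟩ := abs_le.1 (hQle (x - t))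
    obtain ⟨l2, r2⟩ := abs_le.1 (hQle x)
    rw [abs_sub_le_iff]; constructor <;> linarith
  -- integrability
  have hQxc : Continuous fun t : ℝ => Q (x - t) :=
    hQc.comp (continuous_const.sub continuous_id)
  have hPk_int : Integrable (fun t => Q (x - t) * k t) :=
    hki.bdd_mul hQxc.aestronglyMeasurable (ae_of_all _ fun t => by
      rw [Real.norm_eq_abs]; exact hQle (x - t))
  have hek_int : Integrable (fun t => (Q (x - t) - Q x) * k t) :=
    hki.bdd_mul (hQxc.sub continuous_const).aestronglyMeasurable (ae_of_all _ fun t => by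
      rw [Real.norm_eq_abs]; exact he2 t)
  have habs : Integrable (fun t => |Q (x - t) - Q x| * k t) := by
    refine hek_int.abs.congr (ae_of_all _ fun t => ?_)
    simp only [abs_mul, _root_.abs_of_nonneg (hk0 t)]
  -- split off the constant part
  have hsplit : (∫ t, Q (x - t) * k t) = (∫ t, (Q (x - t) - Q x) * k t) + Q x * S := by
    calc (∫ t, Q (x - t) * k t)
        = ∫ t, ((Q (x - t) - Q x) * k t + Q x * k t) := by congr 1; funext t; ring
      _ = (∫ t, (Q (x - t) - Q x) * k t) + ∫ t, Q x * k t :=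
          integral_add hek_int (hki.const_mul _)
      _ = (∫ t, (Q (x - t) - Q x) * k t) + Q x * S := by
          rw [MeasureTheory.integral_const_mul, hktot]
  have hgoal_eq : 1 / S * (∫ t, Q (x - t) * k t) - Q x
      = 1 / S * ∫ t, (Q (x - t) - Q x) * k t := by
    rw [hsplit]; field_simp; ring
  rw [hgoal_eq, abs_mul, abs_of_pos (by positivity : (0:ℝ) < 1 / S)]
  -- bound |∫ e k| by ∫ |e| k and split into near and far parts
  have hb1 : |∫ t, (Q (x - t) - Q x) * k t| ≤ ∫ t, |Q (x - t) - Q x| * k t := by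
    have h0 := norm_integral_le_integral_norm (μ := volume) (fun t => (Q (x - t) - Q x) * k t)
    simp only [Real.norm_eq_abs, abs_mul] at h0
    calc |∫ t, (Q (x - t) - Q x) * k t| ≤ ∫ t, |Q (x - t) - Q x| * |k t| := h0
      _ = ∫ t, |Q (x - t) - Q x| * k t := by
          refine integral_congr_ae (ae_of_all _ fun t => ?_)
          simp only [_root_.abs_of_nonneg (hk0 t)]
  have hsplit2 : (∫ t, |Q (x - t) - Q x| * k t)
      = (∫ t in Icc (-δ) δ, |Q (x - t) - Q x| * k t)
        + ∫ t in (Icc (-δ) δ)ᶜ, |Q (x - t) - Q x| * k t :=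
    (integral_add_compl measurableSet_Icc habs).symm
  have hA : (∫ t in Icc (-δ) δ, |Q (x - t) - Q x| * k t) ≤ Md * δ * S := by
    calc (∫ t in Icc (-δ) δ, |Q (x - t) - Q x| * k t)
        ≤ ∫ t in Icc (-δ) δ, (Md * δ) * k t := by
          refine setIntegral_mono_on habs.integrableOn (hki.const_mul _).integrableOn
            measurableSet_Icc (fun t ht => ?_)
          refine mul_le_mul_of_nonneg_right ((he1 t).trans ?_) (hk0 t)
          have h1 : |t| ≤ δ := abs_le.2 ⟨ht.1, ht.2⟩
          nlinarith
      _ = (Md * δ) * ∫ t in Icc (-δ) δ, k t := MeasureTheory.integral_const_mul _ _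
      _ ≤ (Md * δ) * ∫ t, k t := by
          refine mul_le_mul_of_nonneg_left ?_ (by positivity)
          exact setIntegral_le_integral hki (ae_of_all _ hk0)
      _ = Md * δ * S := by rw [hktot]
  have hIoi : (∫ t in Ioi δ, k t) ≤ C * δ⁻¹ := by
    calc (∫ t in Ioi δ, k t) ≤ ∫ t in Ioi δ, C * t⁻¹ ^ 2 := by
          refine setIntegral_mono_on hki.integrableOn
            ((tail_integrableOn hδ).const_mul _) measurableSet_Ioi (fun t ht => ?_)
          refine le_trans (htail t (ne_of_gt (hδ.trans ht))) le_rfl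
      _ = C * δ⁻¹ := by rw [MeasureTheory.integral_const_mul, tail_integral hδ]
  have hIio : (∫ t in Iio (-δ), k t) ≤ C * δ⁻¹ := by
    calc (∫ t in Iio (-δ), k t) ≤ ∫ t in Iio (-δ), C * t⁻¹ ^ 2 := by
          refine setIntegral_mono_on hki.integrableOn
            ((tail_integrableOn' hδ).const_mul _) measurableSet_Iio (fun t ht => ?_)
          have ht' : t < -δ := ht
          exact htail t (ne_of_lt (by linarith : t < 0))

      _ = C * δ⁻¹ := by rw [MeasureTheory.integral_const_mul, tail_integral' hδ]
  have hB : (∫ t in (Icc (-δ) δ)ᶜ, |Q (x - t) - Q x| * k t)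
      ≤ 2 * Mp * (C * δ⁻¹ + C * δ⁻¹) := by
    calc (∫ t in (Icc (-δ) δ)ᶜ, |Q (x - t) - Q x| * k t)
        ≤ ∫ t in (Icc (-δ) δ)ᶜ, (2 * Mp) * k t := by
          refine setIntegral_mono_on habs.integrableOn (hki.const_mul _).integrableOn
            measurableSet_Icc.compl (fun t _ => ?_)
          exact mul_le_mul_of_nonneg_right (he2 t) (hk0 t)
      _ = (2 * Mp) * ∫ t in (Icc (-δ) δ)ᶜ, k t := MeasureTheory.integral_const_mul _ _
      _ ≤ 2 * Mp * (C * δ⁻¹ + C * δ⁻¹) := by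
          refine mul_le_mul_of_nonneg_left ?_ (by positivity)
          have hcompl : (Icc (-δ) δ)ᶜ = Iio (-δ) ∪ Ioi δ := by
            rw [← Set.Ici_inter_Iic, Set.compl_inter, Set.compl_Ici, Set.compl_Iic]
          rw [hcompl,
            setIntegral_union (by
              rw [Set.disjoint_left]
              intro a ha hb
              simp only [Set.mem_Iio] at ha
              simp only [Set.mem_Ioi] at hb
              linarith)
              measurableSet_Ioi hki.integrableOn hki.integrableOn]
          exact add_le_add hIio hIoi
  have total : |∫ t, (Q (x - t) - Q x) * k t|
      ≤ Md * δ * S + 2 * Mp * (C * δ⁻¹ + C * δ⁻¹) := by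
    rw [hsplit2] at hb1
    exact hb1.trans (add_le_add hA hB)
  have hδval : Md * δ = Mp / 8 := by
    rw [hδdef]; field_simp
  calc 1 / S * |∫ t, (Q (x - t) - Q x) * k t|
      ≤ 1 / S * (Md * δ * S + 2 * Mp * (C * δ⁻¹ + C * δ⁻¹)) :=
        mul_le_mul_of_nonneg_left total (by positivity)
    _ = Md * δ + (1 / S) * (2 * Mp * (C * δ⁻¹ + C * δ⁻¹)) := by
        field_simp
    _ = Mp / 8 + (1 / S) * (2 * Mp * (C * δ⁻¹ + C * δ⁻¹)) := by rw [hδval]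
    _ < Mp / 4 := hfinal


theorem convolution_with_fejer_close
    (P : ℝ → ℝ) (hbdd : ∃ M : ℝ, ∀ x, |P x| ≤ M)
    (hdiff : Differentiable ℝ P) (hint : Integrable P)
    (hd : BddAbove (Set.range fun x => |deriv P x|))
    (hpos : 0 < supNorm P)
    (r : ℝ) (hr : r > 8 ^ 3 / Real.pi * (supNorm (deriv P) / supNorm P)) :
    ∀ x : ℝ,
      |(1 / Real.sqrt (2 * Real.pi)) * (∫ t : ℝ, P (x - t) * (r * fejer (r * t))) - P x| <
        supNorm P / 4 := by
  intro x
  set Mp := supNorm P with hMp_def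
  set Md := supNorm (deriv P) with hMd_def
  have hS : (0:ℝ) < Real.sqrt (2 * π) := Real.sqrt_pos.2 (by positivity)
  have hSS : Real.sqrt (2 * π) * Real.sqrt (2 * π) = 2 * π := Real.mul_self_sqrt (by positivity)
  obtain ⟨M, hM⟩ := hbdd
  have hbdd' : BddAbove (Set.range fun y => |P y|) := ⟨M, by rintro z ⟨y, rfl⟩; exact hM y⟩
  have hPle : ∀ y, |P y| ≤ Mp := fun y => le_ciSup hbdd' y
  have hDle : ∀ y, |deriv P y| ≤ Md := fun y => le_ciSup hd y
  have hMd0 : 0 ≤ Md := (abs_nonneg _).trans (hDle 0)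
  have hMdpos : 0 < Md := by
    rcases hMd0.lt_or_eq with h | h
    · exact h
    · exfalso
      have hder0 : ∀ y, deriv P y = 0 := fun y =>
        abs_eq_zero.1 (le_antisymm (h ▸ hDle y) (abs_nonneg _))
      have hconst : ∀ y, P y = P 0 := fun y => is_const_of_deriv_eq_zero hdiff hder0 y 0
      have hPzero : P 0 = 0 := by
        have hci : Integrable (fun _ : ℝ => P 0) :=
          hint.congr (ae_of_all _ hconst)
        rcases (integrable_const_iff).1 hci with h0 | h0
        · exact h0
        · exact absurd (measure_lt_top (volume : Measure ℝ) Set.univ) (by simp [Real.volume_univ])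
      have : Mp = 0 := by
        rw [hMp_def]
        unfold supNorm
        have : (fun y : ℝ => |P y|) = fun _ : ℝ => 0 := by
          funext y; rw [hconst y, hPzero, abs_zero]
        rw [this, ciSup_const]
      exact absurd hpos (by rw [this]; exact lt_irrefl 0)
  have hrpos : 0 < r :=
    lt_of_le_of_lt (mul_nonneg (by positivity) (div_nonneg hMdpos.le hpos.le)) hr
  have hr' : 512 * Md < r * (π * Mp) := by
    have h := hr
    rw [show (8:ℝ) ^ 3 / π * (Md / Mp) = 512 * Md / (π * Mp) by
      rw [show ((8:ℝ)) ^ 3 = 512 by norm_num]; ring] at h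
    exact (div_lt_iff₀ (by positivity)).mp h
  -- instantiate the abstract estimate
  have hfejer_int : Integrable fejer := integrable_sincsq.const_mul _
  have hk0 : ∀ t : ℝ, 0 ≤ r * fejer (r * t) := by
    intro t
    have : 0 ≤ fejer (r * t) := by unfold fejer; positivity
    positivity
  have hki : Integrable (fun t : ℝ => r * fejer (r * t)) :=
    (hfejer_int.comp_mul_left' hrpos.ne').const_mul r
  have hktot : (∫ t : ℝ, r * fejer (r * t)) = Real.sqrt (2 * π) := by
    rw [MeasureTheory.integral_const_mul, MeasureTheory.Measure.integral_comp_mul_left fejer r,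
      integral_fejer, smul_eq_mul, abs_of_pos (inv_pos.2 hrpos), ← mul_assoc,
      mul_inv_cancel₀ hrpos.ne', one_mul]
  have htail : ∀ t : ℝ, t ≠ 0 →
      r * fejer (r * t) ≤ (4 / (Real.sqrt (2 * π) * r)) * t⁻¹ ^ 2 := by
    intro t ht
    have hv : r * t / 2 ≠ 0 := div_ne_zero (mul_ne_zero hrpos.ne' ht) two_ne_zero
    have hv2 : 0 < (r * t / 2) ^ 2 :=
      lt_of_le_of_ne (sq_nonneg _) (Ne.symm (pow_ne_zero 2 hv))
    have h1 : (Real.sin (r * t / 2) / (r * t / 2)) ^ 2 ≤ ((r * t / 2)⁻¹) ^ 2 := by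
      rw [div_pow, inv_pow, ← one_div]
      exact (div_le_div_iff_of_pos_right hv2).2 (Real.sin_sq_le_one _)
    calc r * fejer (r * t)
        = r * ((1 / Real.sqrt (2 * π)) * (Real.sin (r * t / 2) / (r * t / 2)) ^ 2) := rfl
      _ ≤ r * ((1 / Real.sqrt (2 * π)) * ((r * t / 2)⁻¹) ^ 2) :=
          mul_le_mul_of_nonneg_left (mul_le_mul_of_nonneg_left h1 (by positivity)) hrpos.le
      _ = (4 / (Real.sqrt (2 * π) * r)) * t⁻¹ ^ 2 := by
          field_simp
          ring
  have hlip : ∀ y z : ℝ, |P y - P z| ≤ Md * |y - z| := by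
    intro y z
    have h := Convex.norm_image_sub_le_of_norm_deriv_le (f := P) (s := Set.univ)
      (fun w _ => hdiff w) (fun w _ => by simpa [Real.norm_eq_abs] using hDle w)
      convex_univ (Set.mem_univ z) (Set.mem_univ y)
    simpa [Real.norm_eq_abs] using h
  have hfinal : Mp / 8 + 1 / Real.sqrt (2 * π) *
      (2 * Mp * ((4 / (Real.sqrt (2 * π) * r)) * (Mp / (8 * Md))⁻¹
        + (4 / (Real.sqrt (2 * π) * r)) * (Mp / (8 * Md))⁻¹)) < Mp / 4 := by
    have hδinv : (Mp / (8 * Md))⁻¹ = 8 * Md / Mp := by rw [inv_div]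
    rw [hδinv]
    have hterm : 1 / Real.sqrt (2 * π) *
        (2 * Mp * ((4 / (Real.sqrt (2 * π) * r)) * (8 * Md / Mp)
          + (4 / (Real.sqrt (2 * π) * r)) * (8 * Md / Mp)))
        = 128 * Md / ((Real.sqrt (2 * π) * Real.sqrt (2 * π)) * r) * (Mp / Mp) := by
      ring
    rw [hterm, div_self hpos.ne', mul_one, hSS]
    have key2 : 128 * Md / (2 * π * r) < Mp / 8 := by
      rw [div_lt_div_iff₀ (by positivity) (by norm_num)]
      nlinarith [hr']
    linarith
  exact conv_est P (fun t => r * fejer (r * t)) x Mp Md (Mp / (8 * Md)) (Real.sqrt (2 * π))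
    (4 / (Real.sqrt (2 * π) * r)) hpos hMdpos rfl hS hdiff.continuous hPle hlip hk0 hki hktot
    htail (by positivity) hfinal
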